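/- arXiv:1310.2025 — 7 statements merged into one kernel-verified Lean document; each statement's English description precedes it below -/
import Mathlib

section
/- Let v > 0, a > 0, C > 0 with v < 3a²/(8C), and set ε = (8C/(3a²))·v, so ε ∈ (0,1). Define h⁺(t) = v·t − (1/2)·a·t² + (C/6)·t³ and τ̃ = 2v/a. Then h⁺(τ̃·(1+ε)) < 0. -/
theorem hplus_neg (v a C : ℝ) (hv : 0 < v) (ha : 0 < a) (hC : 0 < C)
    (hsmall : v < 3*a^2/(8*C)) :
    (fun t : ℝ => v*t - (1/2)*a*t^2 + (C/6)*t^3) ((2*v/a) * (1 + (8*C/(3*a^2))*v)) < 0 := by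
  set ε : ℝ := (8*C/(3*a^2))*v with hε
  have hε0 : 0 < ε := by positivity
  have hε1 : ε < 1 := by
    rw [hε, div_mul_eq_mul_div, div_lt_one (by positivity)]
    rw [lt_div_iff₀ (by positivity)] at hsmall
    nlinarith
  simp only
  have key : v*((2*v/a) * (1 + ε)) - (1/2)*a*((2*v/a) * (1 + ε))^2 + (C/6)*((2*v/a) * (1 + ε))^3
      = (2*v^2/a) * (1+ε) * ε * ((1+ε)^2/4 - 1) := by
    rw [hε]
    field_simp
    ring
  rw [key]
  have h1 : (1+ε)^2/4 - 1 < 0 := by nlinarith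
  have h2 : 0 < (2*v^2/a) * (1+ε) * ε := by positivity
  nlinarith
end

section
/- Let v > 0, a > 0, C > 0 with v < 3a²/(8C), and set ε = (8C/(3a²))·v. Define h⁻(t) = v·t − (1/2)·a·t² − (C/6)·t³ and τ̃ = 2v/a. Then h⁻(τ̃·(1−ε)) > 0. -/
theorem hminus_pos (v a C : ℝ) (hv : 0 < v) (ha : 0 < a) (hC : 0 < C)
    (hsmall : v < 3*a^2/(8*C)) :
    0 < (fun t : ℝ => v*t - (1/2)*a*t^2 - (C/6)*t^3) ((2*v/a) * (1 - (8*C/(3*a^2))*v)) := by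
  simp only
  have ha2 : (0:ℝ) < a^2 := by positivity
  set ε : ℝ := (8*C/(3*a^2))*v with hε
  have hε0 : 0 < ε := by positivity
  have hε1 : ε < 1 := by
    rw [hε, div_mul_eq_mul_div, div_lt_one (by positivity)]
    rw [lt_div_iff₀ (by positivity)] at hsmall
    nlinarith
  have hCeq : C = 3*a^2*ε/(8*v) := by rw [hε]; field_simp
  have key : v*((2*v/a)*(1-ε)) - (1/2)*a*((2*v/a)*(1-ε))^2 - (C/6)*((2*v/a)*(1-ε))^3
      = (v^2*ε/(2*a))*(1-ε)*(4 - (1-ε)^2) := by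
    rw [hCeq]
    field_simp
    ring
  rw [key]
  have h1 : 0 < 1 - ε := by linarith
  have h2 : 0 < 4 - (1-ε)^2 := by nlinarith
  have h3 : 0 < v^2*ε/(2*a) := by positivity
  exact mul_pos (mul_pos h3 h1) h2
end

section
/- Let v > 0, a > 0, C > 0. Suppose γ : [0, τ] → ℝ is C² with γ(0) = 0, γ'(0) = v, and |γ''(t) + a| ≤ C·t for all t ∈ [0, τ], where τ > 0 is the first positive zero of γ (i.e., γ(τ) = 0 and γ > 0 on (0, τ)). If v < 3a²/(8C), then |τ/(2v/a) − 1| < (8C/(3a²))·v. -/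
lemma nonneg_of_deriv_nonneg (τ : ℝ) (f f' : ℝ → ℝ) (hτ : 0 ≤ τ)
    (hf : ∀ t ∈ Set.Icc 0 τ, HasDerivAt f (f' t) t)
    (h0 : f 0 = 0)
    (h' : ∀ t ∈ Set.Icc 0 τ, 0 ≤ f' t) :
    ∀ t ∈ Set.Icc 0 τ, 0 ≤ f t := by
  have cont : ContinuousOn f (Set.Icc 0 τ) :=
    fun t ht => (hf t ht).continuousAt.continuousWithinAt
  have mono : MonotoneOn f (Set.Icc 0 τ) := by
    apply monotoneOn_of_deriv_nonneg (convex_Icc 0 τ) cont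
    · intro t ht
      rw [interior_Icc] at ht
      exact (hf t (Set.mem_Icc_of_Ioo ht)).differentiableAt.differentiableWithinAt
    · intro t ht
      rw [interior_Icc] at ht
      rw [(hf t (Set.mem_Icc_of_Ioo ht)).deriv]
      exact h' t (Set.mem_Icc_of_Ioo ht)
  intro t ht
  calc (0:ℝ) = f 0 := h0.symm
    _ ≤ f t := mono (Set.left_mem_Icc.2 hτ) ht ht.1

set_option maxHeartbeats 1600000 in
theorem hop_time (v a C τ : ℝ) (γ γ' γ'' : ℝ → ℝ)
    (hv : 0 < v) (ha : 0 < a) (hC : 0 < C) (hτ : 0 < τ)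
    (hd1 : ∀ t ∈ Set.Icc 0 τ, HasDerivAt γ (γ' t) t)
    (hd2 : ∀ t ∈ Set.Icc 0 τ, HasDerivAt γ' (γ'' t) t)
    (hc : ContinuousOn γ'' (Set.Icc 0 τ))
    (h0 : γ 0 = 0) (hv0 : γ' 0 = v)
    (hacc : ∀ t ∈ Set.Icc 0 τ, |γ'' t + a| ≤ C * t)
    (hτ0 : γ τ = 0) (hpos : ∀ t ∈ Set.Ioo 0 τ, 0 < γ t)
    (hsmall : v < 3*a^2/(8*C)) :
    |τ / (2*v/a) - 1| < (8*C/(3*a^2))*v := by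
  set ε : ℝ := 8*C/(3*a^2)*v with hεdef
  have hε0 : 0 < ε := by positivity
  have hε1 : ε < 1 := by
    rw [lt_div_iff₀ (by positivity : (0:ℝ) < 8*C)] at hsmall
    rw [hεdef, div_mul_eq_mul_div, div_lt_one (by positivity)]
    nlinarith
  -- polynomial derivatives
  have hpoly1 : ∀ t : ℝ, HasDerivAt (fun s : ℝ => v*s - a*s^2/2 + C*s^3/6)
      (v - a*t + C*t^2/2) t := by
    intro t
    have := (((hasDerivAt_id t).const_mul v).sub
      (((hasDerivAt_pow 2 t).const_mul a).div_const 2)).add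
      (((hasDerivAt_pow 3 t).const_mul C).div_const 6)
    exact this.congr_deriv (by ring)
  have hpoly2 : ∀ t : ℝ, HasDerivAt (fun s : ℝ => v - a*s + C*s^2/2)
      (-a + C*t) t := by
    intro t
    have := ((hasDerivAt_const t v).sub ((hasDerivAt_id t).const_mul a)).add
      (((hasDerivAt_pow 2 t).const_mul C).div_const 2)
    exact this.congr_deriv (by ring)
  have hpoly1' : ∀ t : ℝ, HasDerivAt (fun s : ℝ => v*s - a*s^2/2 - C*s^3/6)
      (v - a*t - C*t^2/2) t := by
    intro t
    have := (((hasDerivAt_id t).const_mul v).sub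
      (((hasDerivAt_pow 2 t).const_mul a).div_const 2)).sub
      (((hasDerivAt_pow 3 t).const_mul C).div_const 6)
    exact this.congr_deriv (by ring)
  have hpoly2' : ∀ t : ℝ, HasDerivAt (fun s : ℝ => v - a*s - C*s^2/2)
      (-a - C*t) t := by
    intro t
    have := ((hasDerivAt_const t v).sub ((hasDerivAt_id t).const_mul a)).sub
      (((hasDerivAt_pow 2 t).const_mul C).div_const 2)
    exact this.congr_deriv (by ring)
  -- upper bound γ t ≤ h⁺ t
  have hup' : ∀ t ∈ Set.Icc 0 τ, 0 ≤ v - a*t + C*t^2/2 - γ' t := by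
    apply nonneg_of_deriv_nonneg τ _ (fun t => -a + C*t - γ'' t) hτ.le
    · intro t ht
      exact (hpoly2 t).sub (hd2 t ht)
    · simp [hv0]
    · intro t ht
      have := hacc t ht
      rw [abs_le] at this
      linarith [this.2]
  have hup : ∀ t ∈ Set.Icc 0 τ, 0 ≤ v*t - a*t^2/2 + C*t^3/6 - γ t := by
    apply nonneg_of_deriv_nonneg τ _ (fun t => v - a*t + C*t^2/2 - γ' t) hτ.le
    · intro t ht
      exact (hpoly1 t).sub (hd1 t ht)
    · simp [h0]
    · exact hup'
  -- lower bound h⁻ t ≤ γ t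
  have hlo' : ∀ t ∈ Set.Icc 0 τ, 0 ≤ γ' t - (v - a*t - C*t^2/2) := by
    apply nonneg_of_deriv_nonneg τ _ (fun t => γ'' t - (-a - C*t)) hτ.le
    · intro t ht
      exact (hd2 t ht).sub (hpoly2' t)
    · simp [hv0]
    · intro t ht
      have := hacc t ht
      rw [abs_le] at this
      linarith [this.1]
  have hlo : ∀ t ∈ Set.Icc 0 τ, 0 ≤ γ t - (v*t - a*t^2/2 - C*t^3/6) := by
    apply nonneg_of_deriv_nonneg τ _ (fun t => γ' t - (v - a*t - C*t^2/2)) hτ.le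
    · intro t ht
      exact (hd1 t ht).sub (hpoly1' t)
    · simp [h0]
    · exact hlo'
  have hT : 0 < 2*v/a := by positivity
  -- τ < (2v/a)(1+ε)
  have hupper : τ < 2*v/a * (1+ε) := by
    by_contra h
    push_neg at h
    set T : ℝ := 2*v/a * (1+ε) with hTdef
    have hT0 : 0 < T := by positivity
    have hTmem : T ∈ Set.Icc 0 τ := ⟨hT0.le, h⟩
    have hγT : 0 ≤ γ T := by
      rcases eq_or_lt_of_le h with h' | h'
      · rw [h', hτ0]
      · exact (hpos T ⟨hT0, h'⟩).le
    have hb := hup T hTmem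
    have key : v*T - a*T^2/2 + C*T^3/6 = T*(v*ε)*((1+ε)^2/4 - 1) := by
      rw [hTdef, hεdef]
      field_simp
      ring
    have hneg : T*(v*ε)*((1+ε)^2/4 - 1) < 0 := by
      apply mul_neg_of_pos_of_neg (by positivity)
      nlinarith
    linarith [key ▸ hb]
  -- (2v/a)(1-ε) < τ
  have hlower : 2*v/a * (1-ε) < τ := by
    by_contra h
    push_neg at h
    have hb := hlo τ (Set.right_mem_Icc.2 hτ.le)
    rw [hτ0] at hb
    have hfac : v - a*τ/2 - C*τ^2/6 ≤ 0 := by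
      have : τ * (v - a*τ/2 - C*τ^2/6) ≤ 0 := by nlinarith
      nlinarith
    have hcmp : v*ε*(1 - (1-ε)^2/4) ≤ v - a*τ/2 - C*τ^2/6 := by
      have hτle : τ ≤ 2*v/a * (1-ε) := h
      have ha2 : a*τ/2 ≤ v*(1-ε) := by
        have h2 : a * (2*v/a*(1-ε)) = 2*v*(1-ε) := by field_simp
        have := mul_le_mul_of_nonneg_left hτle ha.le
        rw [h2] at this
        linarith
      have hc2 : C*τ^2/6 ≤ v*ε/4*(1-ε)^2 := by
        have hτsq : τ^2 ≤ (2*v/a * (1-ε))^2 := by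
          apply sq_le_sq' _ hτle
          nlinarith
        have h3 : C*τ^2/6 ≤ C*(2*v/a * (1-ε))^2/6 := by nlinarith
        have hscale : C * (2*v/a)^2 / 6 = v*ε/4 := by
          rw [hεdef]; field_simp; ring
        have h4 : C*(2*v/a * (1-ε))^2/6 = v*ε/4*(1-ε)^2 := by
          calc C*(2*v/a * (1-ε))^2/6 = C*(2*v/a)^2/6*(1-ε)^2 := by ring
            _ = v*ε/4*(1-ε)^2 := by rw [hscale]
        linarith [h4 ▸ h3]
      nlinarith
    have hpos' : 0 < v*ε*(1 - (1-ε)^2/4) := by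
      apply mul_pos (by positivity)
      nlinarith
    linarith
  -- conclude
  rw [abs_lt]
  constructor
  · have h1 : (1 - ε) * (2*v/a) < τ := by
      have : (1 - ε) * (2*v/a) = 2*v/a*(1-ε) := by ring
      linarith [this ▸ hlower]
    have h2 : 1 - ε < τ/(2*v/a) := by
      rw [lt_div_iff₀ hT]; linarith
    linarith
  · have h2 : τ < (ε + 1) * (2*v/a) := by
      have : (ε + 1) * (2*v/a) = 2*v/a*(1+ε) := by ring
      linarith [this ▸ hupper]
    rw [sub_lt_iff_lt_add, div_lt_iff₀ hT]
    linarith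
end

section
/- Let f : [0, ∞) → ℝ be continuous with compact support contained in [0, L]. If ∫₀^L e^{−λ·s}·f(s) ds = 0 for all λ > λ₀ (for some fixed λ₀ ∈ ℝ), then f = 0. -/
open MeasureTheory intervalIntegral Set Polynomial

theorem laplace_injective (L lam₀ : ℝ) (f : ℝ → ℝ) (hL : 0 < L)
    (hf : Continuous f) (hsupp : tsupport f ⊆ Set.Icc 0 L)
    (hvan : ∀ lam : ℝ, lam₀ < lam → (∫ s in (0:ℝ)..L, Real.exp (-lam * s) * f s) = 0) :
    f = 0 := by
  set μ : ℝ := max lam₀ 0 + 1 with hμdef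
  have hμpos : 0 < μ := lt_of_le_of_lt (le_max_right _ _) (lt_add_one _)
  have hμgt : lam₀ < μ := lt_of_le_of_lt (le_max_left _ _) (lt_add_one _)
  have hcont_exp : Continuous fun s : ℝ => Real.exp (-μ * s) :=
    Real.continuous_exp.comp (continuous_const.mul continuous_id)
  -- moments vanish
  have hmom : ∀ n : ℕ, (∫ s in (0:ℝ)..L, (Real.exp (-μ * s)) ^ (n + 1) * f s) = 0 := by
    intro n
    have h1 : lam₀ < (n + 1 : ℝ) * μ := by
      have hn : (0:ℝ) ≤ (n:ℝ) := Nat.cast_nonneg n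
      nlinarith
    calc (∫ s in (0:ℝ)..L, (Real.exp (-μ * s)) ^ (n + 1) * f s)
        = ∫ s in (0:ℝ)..L, Real.exp (-((n + 1 : ℝ) * μ) * s) * f s := by
          apply intervalIntegral.integral_congr
          intro s _
          have h3 : Real.exp (-μ * s) ^ (n + 1) = Real.exp (-((n + 1 : ℝ) * μ) * s) := by
            rw [← Real.exp_nat_mul]
            congr 1
            push_cast
            ring
          simp only [h3]
      _ = 0 := hvan ((n + 1 : ℝ) * μ) h1
  -- polynomial combinations vanish
  have hpoly : ∀ p : ℝ[X],
      (∫ s in (0:ℝ)..L, p.eval (Real.exp (-μ * s)) * (Real.exp (-μ * s) * f s)) = 0 := by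
    intro p
    have hint : ∀ k : ℕ, IntervalIntegrable
        (fun s => p.coeff k * ((Real.exp (-μ * s)) ^ (k + 1) * f s)) volume 0 L := by
      intro k
      exact (continuous_const.mul ((hcont_exp.pow (k+1)).mul hf)).intervalIntegrable 0 L
    calc (∫ s in (0:ℝ)..L, p.eval (Real.exp (-μ * s)) * (Real.exp (-μ * s) * f s))
        = ∫ s in (0:ℝ)..L, ∑ k ∈ Finset.range (p.natDegree + 1),
            p.coeff k * ((Real.exp (-μ * s)) ^ (k + 1) * f s) := by
          apply intervalIntegral.integral_congr
          intro s _
          show p.eval (Real.exp (-μ * s)) * (Real.exp (-μ * s) * f s) = _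
          rw [Polynomial.eval_eq_sum_range, Finset.sum_mul]
          apply Finset.sum_congr rfl
          intro k _
          ring
      _ = ∑ k ∈ Finset.range (p.natDegree + 1),
            ∫ s in (0:ℝ)..L, p.coeff k * ((Real.exp (-μ * s)) ^ (k + 1) * f s) :=
          intervalIntegral.integral_finset_sum (fun k _ => hint k)
      _ = 0 := by
          apply Finset.sum_eq_zero
          intro k _
          rw [intervalIntegral.integral_const_mul, hmom k, mul_zero]
  -- bound on f
  have hcs : HasCompactSupport f :=
    IsCompact.of_isClosed_subset isCompact_Icc (isClosed_tsupport f) hsupp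
  obtain ⟨M, hM⟩ := hcs.exists_bound_of_continuous hf
  have hM0 : 0 ≤ M := le_trans (norm_nonneg (f 0)) (hM 0)
  -- Stone-Weierstrass on X = Icc 0 L
  have hSW : ∀ ε : ℝ, 0 < ε → ∃ p : ℝ[X],
      ∀ s ∈ Set.Icc (0:ℝ) L, |p.eval (Real.exp (-μ * s)) - f s| < ε := by
    intro ε hε
    set X := Set.Icc (0:ℝ) L
    let φ : C(X, ℝ) := ⟨fun x => Real.exp (-μ * (x : ℝ)),
      hcont_exp.comp continuous_subtype_val⟩
    set A : Subalgebra ℝ C(X, ℝ) := Algebra.adjoin ℝ {φ} with hA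
    have hsep : A.SeparatesPoints := by
      intro x y hxy
      refine ⟨φ, ⟨φ, Algebra.subset_adjoin rfl, rfl⟩, ?_⟩
      intro h
      apply hxy
      have h2 : -μ * (x : ℝ) = -μ * (y : ℝ) := Real.exp_injective h
      have h3 : (x : ℝ) = (y : ℝ) :=
        mul_left_cancel₀ (neg_ne_zero.mpr (ne_of_gt hμpos)) h2
      exact Subtype.ext h3
    obtain ⟨g, hg⟩ := ContinuousMap.exists_mem_subalgebra_near_continuous_of_separatesPoints
      A hsep (fun x : X => f x) (hf.comp continuous_subtype_val) ε hε
    have hgA : (g : C(X, ℝ)) ∈ (Polynomial.aeval (R := ℝ) φ).range := by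
      rw [← Algebra.adjoin_singleton_eq_range_aeval]
      exact g.2
    obtain ⟨p, hp⟩ := hgA
    refine ⟨p, fun s hs => ?_⟩
    have h5 := hg ⟨s, hs⟩
    rw [← hp] at h5
    simp only [AlgHom.toRingHom_eq_coe, RingHom.coe_coe] at h5
    rw [Polynomial.aeval_continuousMap_apply] at h5
    simpa [Real.norm_eq_abs, φ] using h5
  -- the key integral is zero
  set I : ℝ := ∫ s in (0:ℝ)..L, Real.exp (-μ * s) * (f s) ^ 2 with hI
  have hIint : IntervalIntegrable (fun s => Real.exp (-μ * s) * (f s) ^ 2) volume 0 L :=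
    (hcont_exp.mul (hf.pow 2)).intervalIntegrable 0 L
  have hIzero : I = 0 := by
    have habs : ∀ ε : ℝ, 0 < ε → |I| ≤ M * ε * L := by
      intro ε hε
      obtain ⟨p, hp⟩ := hSW ε hε
      have hpcont : Continuous fun s : ℝ => p.eval (Real.exp (-μ * s)) :=
        p.continuous.comp hcont_exp
      have hdiff : I = ∫ s in (0:ℝ)..L,
          (Real.exp (-μ * s) * f s) * (f s - p.eval (Real.exp (-μ * s))) := by
        have hsub : (∫ s in (0:ℝ)..L,
            (Real.exp (-μ * s) * f s) * (f s - p.eval (Real.exp (-μ * s))))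
            = (∫ s in (0:ℝ)..L, Real.exp (-μ * s) * (f s) ^ 2)
              - ∫ s in (0:ℝ)..L, p.eval (Real.exp (-μ * s)) * (Real.exp (-μ * s) * f s) := by
          rw [← intervalIntegral.integral_sub hIint
            (g := fun s => p.eval (Real.exp (-μ * s)) * (Real.exp (-μ * s) * f s))
            ((hpcont.mul (hcont_exp.mul hf)).intervalIntegrable 0 L)]
          apply intervalIntegral.integral_congr
          intro s _
          show (Real.exp (-μ * s) * f s) * (f s - p.eval (Real.exp (-μ * s))) = _
          ring
        rw [hI, hsub, hpoly p, sub_zero]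
      rw [hdiff]
      have hb := intervalIntegral.norm_integral_le_of_norm_le_const (a := 0) (b := L)
        (C := M * ε)
        (f := fun s => (Real.exp (-μ * s) * f s) * (f s - p.eval (Real.exp (-μ * s))))
        (fun s hs => by
          have hsIcc : s ∈ Set.Icc (0:ℝ) L := by
            rw [Set.uIoc_of_le hL.le] at hs
            exact ⟨hs.1.le, hs.2⟩
          have h1 : Real.exp (-μ * s) ≤ 1 := by
            apply Real.exp_le_one_iff.mpr
            nlinarith [hsIcc.1]
          have h2 : |f s| ≤ M := hM s
          have h3 : |f s - p.eval (Real.exp (-μ * s))| ≤ ε := by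
            rw [abs_sub_comm]; exact (hp s hsIcc).le
          have h4 : (0:ℝ) < Real.exp (-μ * s) := Real.exp_pos _
          rw [Real.norm_eq_abs, abs_mul, abs_mul]
          calc |Real.exp (-μ * s)| * |f s| * |f s - p.eval (Real.exp (-μ * s))|
              ≤ 1 * M * ε := by
                apply mul_le_mul _ h3 (abs_nonneg _) (by nlinarith)
                apply mul_le_mul _ h2 (abs_nonneg _) zero_le_one
                rw [abs_of_pos h4]; exact h1
            _ = M * ε := by ring)
      rw [Real.norm_eq_abs] at hb
      calc |_| ≤ M * ε * |L - 0| := hb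
        _ = M * ε * L := by rw [sub_zero, abs_of_pos hL]
    by_contra hne
    have hpos : 0 < |I| := abs_pos.mpr hne
    have hε : (0:ℝ) < |I| / (2 * (M * L + 1)) := by positivity
    have hc := habs _ hε
    have hML : 0 ≤ M * L := mul_nonneg hM0 hL.le
    rw [div_eq_mul_inv] at hc
    have h2 : (0:ℝ) < 2 * (M * L + 1) := by positivity
    have h3 := mul_le_mul_of_nonneg_right hc h2.le
    have h4 : (2 * (M * L + 1))⁻¹ * (2 * (M * L + 1)) = 1 := inv_mul_cancel₀ (ne_of_gt h2)
    nlinarith [mul_nonneg hML hpos.le]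
  -- conclude f = 0 on Icc 0 L
  have hae : (fun s => Real.exp (-μ * s) * (f s) ^ 2) =ᵐ[volume.restrict (Set.Ioc 0 L)]
      (0 : ℝ → ℝ) := by
    rw [← intervalIntegral.integral_eq_zero_iff_of_le_of_nonneg_ae hL.le
      (Filter.Eventually.of_forall fun s => by positivity) hIint]
    exact hIzero
  have heqOn : Set.EqOn (fun s => Real.exp (-μ * s) * (f s) ^ 2) 0 (Set.Ioc 0 L) :=
    MeasureTheory.Measure.eqOn_Ioc_of_ae_eq volume hae
      (hcont_exp.mul (hf.pow 2)).continuousOn continuousOn_const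
  have hfIoc : Set.EqOn f 0 (Set.Ioc (0:ℝ) L) := by
    intro s hs
    have h6 := heqOn hs
    simp only [Pi.zero_apply] at h6 ⊢
    have hexp : (0:ℝ) < Real.exp (-μ * s) := Real.exp_pos _
    have h7 : f s ^ 2 = 0 := by
      rcases mul_eq_zero.mp h6 with h | h
      · exact absurd h (ne_of_gt hexp)
      · exact h
    exact pow_eq_zero_iff (two_ne_zero) |>.mp h7
  have hfIcc : ∀ s ∈ Set.Icc (0:ℝ) L, f s = 0 := by
    have hcl : Set.EqOn f 0 (closure (Set.Ioc (0:ℝ) L)) :=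
      hfIoc.closure hf continuous_const
    intro s hs
    have h7 : s ∈ closure (Set.Ioc (0:ℝ) L) := by
      rw [closure_Ioc hL.ne]
      exact hs
    exact hcl h7
  funext s
  by_cases hs : s ∈ Set.Icc (0:ℝ) L
  · exact hfIcc s hs
  · exact image_eq_zero_of_notMem_tsupport (fun h => hs (hsupp h))
end

section
/- Let f : ℂ → ℂ be integrable, compactly supported, and rotationally symmetric, i.e., f(e^{iθ}·z) = f(z) for all z ∈ ℂ and θ ∈ ℝ. Then If(λ) = ∫_ℂ e^{λz}·f(z) dH²(z) is constant in λ; in particular If(λ) = ∫_ℂ f dH² for all λ ∈ ℂ. -/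
open MeasureTheory Complex

/-- The average of `exp` over a circle centered at `0` is `exp 0 = 1`. -/
lemma exp_circle_integral_aux (w : ℂ) :
    (∫ θ in (0:ℝ)..(2 * Real.pi), Complex.exp (Complex.exp (θ * Complex.I) * w))
      = (2 * Real.pi : ℝ) := by
  rcases eq_or_ne w 0 with rfl | hw
  · simp [Complex.real_smul]
  · set R : ℝ := ‖w‖ with hRdef
    have hR0 : 0 < R := by simpa [hRdef] using (norm_pos_iff.mpr hw)
    have key : (∮ z in C(0, R), (z - 0)⁻¹ • Complex.exp z)
        = (2 * Real.pi * Complex.I : ℂ) • Complex.exp 0 :=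
      (Complex.differentiable_exp.diffContOnCl).circleIntegral_sub_inv_smul
        (Metric.mem_ball_self hR0)
    rw [circleIntegral] at key
    have hcongr : ∀ θ : ℝ,
        deriv (circleMap 0 R) θ • ((circleMap 0 R θ - 0)⁻¹ • Complex.exp (circleMap 0 R θ))
          = Complex.I * Complex.exp (circleMap 0 R θ) := by
      intro θ
      have hne : circleMap 0 R θ ≠ 0 := by
        exact circleMap_ne_center hR0.ne'
      rw [deriv_circleMap]
      have : circleMap 0 R θ - 0 = circleMap 0 R θ := by ring
      rw [this]
      field_simp
      simp only [smul_eq_mul, one_div]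
      rw [mul_comm (circleMap 0 R θ) I, mul_assoc, ← mul_assoc (circleMap 0 R θ), mul_inv_cancel₀ hne, one_mul]
    rw [intervalIntegral.integral_congr (fun θ _ => hcongr θ)] at key
    rw [intervalIntegral.integral_const_mul] at key
    have hbase : (∫ θ in (0:ℝ)..(2 * Real.pi), Complex.exp (circleMap 0 R θ))
        = (2 * Real.pi : ℝ) := by
      apply mul_left_cancel₀ Complex.I_ne_zero
      rw [key]
      simp [Complex.exp_zero, smul_eq_mul]
      ring
    -- now shift by `arg w`
    have hmap : ∀ θ : ℝ, Complex.exp (θ * Complex.I) * w = circleMap 0 R (θ + w.arg) := by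
      intro θ
      have : (R : ℂ) * Complex.exp (w.arg * Complex.I) = w := by
        simpa [hRdef] using Complex.norm_mul_exp_arg_mul_I w
      rw [circleMap_zero, Complex.ofReal_add, add_mul, Complex.exp_add, mul_left_comm, this]
    have hper : Function.Periodic (fun θ : ℝ => Complex.exp (circleMap 0 R θ)) (2 * Real.pi) :=
      (periodic_circleMap 0 R).comp Complex.exp
    calc (∫ θ in (0:ℝ)..(2 * Real.pi), Complex.exp (Complex.exp (θ * Complex.I) * w))
        = ∫ θ in (0:ℝ)..(2 * Real.pi), Complex.exp (circleMap 0 R (θ + w.arg)) := by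
          exact intervalIntegral.integral_congr (fun θ _ => by rw [hmap θ])
      _ = ∫ θ in (0 + w.arg)..(2 * Real.pi + w.arg),
            Complex.exp (circleMap 0 R θ) := by
          rw [← intervalIntegral.integral_comp_add_right]
      _ = ∫ θ in (0:ℝ)..(2 * Real.pi), Complex.exp (circleMap 0 R θ) := by
          have := hper.intervalIntegral_add_eq w.arg 0
          simpa [add_comm, zero_add] using this
      _ = (2 * Real.pi : ℝ) := hbase

/-- Change of variables under rotation. -/
lemma integral_rot (g : ℂ → ℂ) (a : Circle) : (∫ z : ℂ, g (a * z)) = ∫ z : ℂ, g z := by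
  have h := ((rotation a).measurePreserving).integral_comp
    (rotation a).toHomeomorph.measurableEmbedding g
  simpa [rotation_apply] using h

theorem I_rotation_invariant (f : ℂ → ℂ) (hf : Integrable f) (hsupp : HasCompactSupport f)
    (hrot : ∀ (θ : ℝ) (z : ℂ), f (Complex.exp (θ * Complex.I) * z) = f z) :
    ∀ l : ℂ, (∫ z : ℂ, Complex.exp (l * z) * f z) = ∫ z : ℂ, f z := by
  intro l
  have h2pi : (0:ℝ) < 2 * Real.pi := Real.two_pi_pos
  -- Step A: rotating `l` doesn't change the integral.
  have stepA : ∀ θ : ℝ,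
      (∫ z : ℂ, Complex.exp (Complex.exp (θ * Complex.I) * l * z) * f z)
        = ∫ z : ℂ, Complex.exp (l * z) * f z := by
    intro θ
    calc (∫ z : ℂ, Complex.exp (Complex.exp (θ * Complex.I) * l * z) * f z)
        = ∫ z : ℂ, Complex.exp (l * ((Circle.exp θ : ℂ) * z)) * f ((Circle.exp θ : ℂ) * z) := by
          congr 1
          funext z
          rw [Circle.coe_exp, hrot θ z]
          congr 2
          ring
      _ = ∫ z : ℂ, Complex.exp (l * z) * f z :=
          integral_rot (fun z => Complex.exp (l * z) * f z) (Circle.exp θ)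
  -- Step B: Fubini.
  obtain ⟨M, hM⟩ := hsupp.isCompact.isBounded.subset_closedBall 0
  set C : ℝ := Real.exp (‖l‖ * M) with hC
  set μ : Measure ℝ := volume.restrict (Set.Ioc (0:ℝ) (2 * Real.pi)) with hμ
  have hμfin : IsFiniteMeasure μ := by
    constructor
    rw [hμ, Measure.restrict_apply_univ, Real.volume_Ioc]
    exact ENNReal.ofReal_lt_top
  have hbound : ∀ p : ℝ × ℂ,
      ‖Complex.exp (Complex.exp (p.1 * Complex.I) * l * p.2) * f p.2‖ ≤ C * ‖f p.2‖ := by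
    rintro ⟨θ, z⟩
    rcases eq_or_ne (f z) 0 with h0 | h0
    · simp [h0]
    · have hz : ‖z‖ ≤ M := by
        have hzt : z ∈ tsupport f := subset_tsupport f h0
        simpa [Complex.norm_def] using mem_closedBall_zero_iff.mp (hM hzt)
      have h1 : ‖Complex.exp (Complex.exp (θ * Complex.I) * l * z)‖ ≤ C := by
        rw [Complex.norm_exp, hC]
        apply Real.exp_le_exp.2
        calc (Complex.exp (θ * Complex.I) * l * z).re
            ≤ ‖Complex.exp (θ * Complex.I) * l * z‖ := Complex.re_le_norm _
          _ = ‖l‖ * ‖z‖ := by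
              rw [norm_mul, norm_mul, Complex.norm_exp_ofReal_mul_I, one_mul]
          _ ≤ ‖l‖ * M := by
              exact mul_le_mul_of_nonneg_left hz (norm_nonneg l)
      calc ‖Complex.exp (Complex.exp (θ * Complex.I) * l * z) * f z‖
          = ‖Complex.exp (Complex.exp (θ * Complex.I) * l * z)‖ * ‖f z‖ := norm_mul _ _
        _ ≤ C * ‖f z‖ := mul_le_mul_of_nonneg_right h1 (norm_nonneg _)
  have hmeas : AEStronglyMeasurable
      (fun p : ℝ × ℂ => Complex.exp (Complex.exp (p.1 * Complex.I) * l * p.2) * f p.2)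
      (μ.prod volume) := by
    have hcont : Continuous fun p : ℝ × ℂ =>
        Complex.exp (Complex.exp (p.1 * Complex.I) * l * p.2) := by fun_prop
    have hsnd : AEStronglyMeasurable (fun p : ℝ × ℂ => f p.2) (μ.prod volume) :=
      hf.1.comp_quasiMeasurePreserving Measure.quasiMeasurePreserving_snd
    exact hcont.aestronglyMeasurable.mul hsnd
  have hdom : Integrable (fun p : ℝ × ℂ => C * ‖f p.2‖) (μ.prod volume) :=
    (integrable_const C).mul_prod hf.norm
  have hint : Integrable
      (Function.uncurry fun (θ : ℝ) (z : ℂ) =>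
        Complex.exp (Complex.exp (θ * Complex.I) * l * z) * f z) (μ.prod volume) :=
    Integrable.mono' hdom hmeas (Filter.Eventually.of_forall fun p => hbound p)
  have swap := MeasureTheory.integral_integral_swap hint
  -- Evaluate the LHS of `swap`.
  have hLHS : (∫ θ, (∫ z : ℂ, Complex.exp (Complex.exp (θ * Complex.I) * l * z) * f z) ∂μ)
      = ((2 * Real.pi : ℝ) : ℂ) * ∫ z : ℂ, Complex.exp (l * z) * f z := by
    calc (∫ θ, (∫ z : ℂ, Complex.exp (Complex.exp (θ * Complex.I) * l * z) * f z) ∂μ)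
        = ∫ _θ, (∫ z : ℂ, Complex.exp (l * z) * f z) ∂μ := by
          exact integral_congr_ae (Filter.Eventually.of_forall fun θ => stepA θ)
      _ = ((2 * Real.pi : ℝ) : ℂ) * ∫ z : ℂ, Complex.exp (l * z) * f z := by
          rw [integral_const, hμ, measureReal_restrict_apply_univ, Real.volume_real_Ioc,
            max_eq_left (by linarith), Complex.real_smul]
          norm_num
  -- Evaluate the RHS of `swap`.
  have hRHS : (∫ z : ℂ, (∫ θ, Complex.exp (Complex.exp (θ * Complex.I) * l * z) * f z ∂μ))
      = ((2 * Real.pi : ℝ) : ℂ) * ∫ z : ℂ, f z := by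
    have hinner : ∀ z : ℂ,
        (∫ θ, Complex.exp (Complex.exp (θ * Complex.I) * l * z) * f z ∂μ)
          = ((2 * Real.pi : ℝ) : ℂ) * f z := by
      intro z
      rw [integral_mul_const]
      congr 1
      have : (∫ θ, Complex.exp (Complex.exp (θ * Complex.I) * l * z) ∂μ)
          = ∫ θ in (0:ℝ)..(2 * Real.pi), Complex.exp (Complex.exp (θ * Complex.I) * (l * z)) := by
        rw [intervalIntegral.integral_of_le h2pi.le, hμ]
        congr 1
        funext θ
        rw [mul_assoc]
      rw [this, exp_circle_integral_aux (l * z)]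
    calc (∫ z : ℂ, (∫ θ, Complex.exp (Complex.exp (θ * Complex.I) * l * z) * f z ∂μ))
        = ∫ z : ℂ, ((2 * Real.pi : ℝ) : ℂ) * f z := by
          exact integral_congr_ae (Filter.Eventually.of_forall fun z => hinner z)
      _ = ((2 * Real.pi : ℝ) : ℂ) * ∫ z : ℂ, f z := integral_const_mul _ _
  rw [hLHS, hRHS] at swap
  have h2ne : ((2 * Real.pi : ℝ) : ℂ) ≠ 0 := by
    exact_mod_cast ne_of_gt h2pi
  exact mul_left_cancel₀ h2ne swap
end

section
/- Let f : ℂ → ℂ be integrable and compactly supported, and rotationally symmetric about a point w ∈ ℂ (i.e., z ↦ f(w + z) is rotationally symmetric), with ∫_ℂ f dH² = 0. Then If(λ) = ∫_ℂ e^{λz}·f(z) dH²(z) = 0 for all λ ∈ ℂ. -/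
open MeasureTheory Complex

private lemma rot_int_aux (c : Circle) (φ : ℂ → ℂ) :
    (∫ z : ℂ, φ ((c : ℂ) * z)) = ∫ z : ℂ, φ z := by
  have h := (rotation c).measurePreserving
  have := h.integral_comp (rotation c).toHomeomorph.measurableEmbedding φ
  simpa [rotation_apply] using this

theorem I_kernel (f : ℂ → ℂ) (hf : Integrable f) (hsupp : HasCompactSupport f) (w : ℂ)
    (hrot : ∀ (θ : ℝ) (z : ℂ), f (w + Complex.exp (θ * Complex.I) * z) = f (w + z))
    (hzero : (∫ z : ℂ, f z) = 0) :
    ∀ l : ℂ, (∫ z : ℂ, Complex.exp (l * z) * f z) = 0 := by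
  intro l
  set g : ℂ → ℂ := fun z => f (w + z) with hg
  have hgint : Integrable g := hf.comp_add_left w
  have hgsupp : HasCompactSupport g := by
    have := hsupp.comp_homeomorph (Homeomorph.addLeft w)
    exact this
  have hgrot : ∀ (θ : ℝ) (z : ℂ), g (Complex.exp (θ * Complex.I) * z) = g z := by
    intro θ z; simp only [hg]; exact hrot θ z
  have hgzero : (∫ z : ℂ, g z) = 0 := by
    rw [hg]
    rw [show (fun z => f (w + z)) = fun z => f (w + z) from rfl]
    rw [integral_add_left_eq_self f w]; exact hzero
  -- bound on support
  obtain ⟨R, hR0, hRK⟩ : ∃ R : ℝ, 0 ≤ R ∧ tsupport g ⊆ Metric.closedBall 0 R := by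
    obtain ⟨R, hR⟩ := hgsupp.isCompact.isBounded.subset_closedBall 0
    exact ⟨max R 0, le_max_right _ _,
      hR.trans (Metric.closedBall_subset_closedBall (le_max_left _ _))⟩
  -- the series terms
  set F : ℕ → ℂ → ℂ := fun n z => (l * z) ^ n / n.factorial * g z with hF
  have hFbound : ∀ (n : ℕ) (z : ℂ),
      ‖F n z‖ ≤ (‖l‖ * R) ^ n / n.factorial * ‖g z‖ := by
    intro n z
    by_cases hz : z ∈ tsupport g
    · have hzR : ‖z‖ ≤ R := by simpa using hRK hz
      have h1 : ‖(l * z) ^ n / (n.factorial : ℂ)‖ ≤ (‖l‖ * R) ^ n / n.factorial := by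
        rw [norm_div, norm_pow, norm_mul]
        have : (‖(n.factorial : ℂ)‖ : ℝ) = n.factorial := by
          simp [Complex.norm_natCast]
        rw [this]
        apply div_le_div_of_nonneg_right ?_ (by positivity)
        exact pow_le_pow_left₀ (by positivity) (by
          exact mul_le_mul_of_nonneg_left hzR (norm_nonneg l)) n
      calc ‖F n z‖ = ‖(l * z) ^ n / (n.factorial : ℂ)‖ * ‖g z‖ := by
            rw [hF]; simp [norm_mul]
        _ ≤ (‖l‖ * R) ^ n / n.factorial * ‖g z‖ :=
            mul_le_mul_of_nonneg_right h1 (norm_nonneg _)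
    · have : g z = 0 := image_eq_zero_of_notMem_tsupport hz
      simp [hF, this]
  have hFint : ∀ n : ℕ, Integrable (F n) := by
    intro n
    have heq : F n = fun z =>
        (tsupport g).indicator (fun z => (l * z) ^ n / n.factorial) z * g z := by
      funext z
      by_cases hz : z ∈ tsupport g
      · simp [hF, Set.indicator_of_mem hz]
      · simp [hF, Set.indicator_of_notMem hz, image_eq_zero_of_notMem_tsupport hz]
    rw [heq]
    apply hgint.bdd_mul (c := (‖l‖ * R) ^ n / n.factorial)
    · exact (((continuous_const.mul continuous_id).pow n).div_const _).aestronglyMeasurable.indicator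
        (isClosed_tsupport g).measurableSet
    · refine Filter.Eventually.of_forall (fun z => ?_)
      by_cases hz : z ∈ tsupport g
      · rw [Set.indicator_of_mem hz]
        have hzR : ‖z‖ ≤ R := by simpa using hRK hz
        rw [norm_div, norm_pow, norm_mul]
        have : (‖(n.factorial : ℂ)‖ : ℝ) = n.factorial := by simp [Complex.norm_natCast]
        rw [this]
        apply div_le_div_of_nonneg_right ?_ (by positivity)
        exact pow_le_pow_left₀ (by positivity)
          (mul_le_mul_of_nonneg_left hzR (norm_nonneg l)) n
      · rw [Set.indicator_of_notMem hz]; simp; positivity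
  have hFsum : Summable fun n : ℕ => ∫ z : ℂ, ‖F n z‖ := by
    apply Summable.of_nonneg_of_le
      (fun n => integral_nonneg fun z => norm_nonneg _)
      (fun n => ?_)
      (Summable.mul_right (∫ z : ℂ, ‖g z‖)
        (Real.summable_pow_div_factorial (‖l‖ * R)))
    calc (∫ z : ℂ, ‖F n z‖) ≤ ∫ z : ℂ, (‖l‖ * R) ^ n / n.factorial * ‖g z‖ :=
          integral_mono (hFint n).norm (hgint.norm.const_mul _) (hFbound n)
      _ = (‖l‖ * R) ^ n / n.factorial * ∫ z : ℂ, ‖g z‖ := integral_const_mul _ _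
  have hsum := hasSum_integral_of_summable_integral_norm (μ := volume) hFint hFsum
  -- identify the pointwise sum with exp(lz) * g z
  have htsum : (fun z : ℂ => ∑' n : ℕ, F n z) = fun z => Complex.exp (l * z) * g z := by
    funext z
    rw [hF]
    simp only
    rw [tsum_mul_right, Complex.exp_eq_exp_ℂ, NormedSpace.exp_eq_tsum_div]
  rw [htsum] at hsum
  -- each term integral vanishes
  have hmoment : ∀ n : ℕ, 1 ≤ n → (∫ z : ℂ, z ^ n * g z) = 0 := by
    intro n hn
    have hn' : (n : ℝ) ≠ 0 := Nat.cast_ne_zero.mpr (by omega)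
    set c : Circle := Circle.exp (Real.pi / n) with hc
    have hcpow : (c : ℂ) ^ n = -1 := by
      rw [hc, Circle.coe_exp, ← Complex.exp_nat_mul]
      have : (n : ℂ) * (↑(Real.pi / n) * Complex.I) = Real.pi * Complex.I := by
        push_cast
        have hnc : (n : ℂ) ≠ 0 := Nat.cast_ne_zero.mpr (by omega)
        field_simp
      rw [this, Complex.exp_pi_mul_I]
    have hrotc := rot_int_aux c (fun z => z ^ n * g z)
    have : (∫ z : ℂ, ((c : ℂ) * z) ^ n * g ((c : ℂ) * z)) = ∫ z : ℂ, z ^ n * g z := hrotc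
    have hgc : ∀ z : ℂ, g ((c : ℂ) * z) = g z := by
      intro z
      have := hgrot (Real.pi / n) z
      rwa [show Complex.exp (↑(Real.pi / n) * Complex.I) = (c : ℂ) by
        rw [hc, Circle.coe_exp]] at this
    rw [show (fun z : ℂ => ((c : ℂ) * z) ^ n * g ((c : ℂ) * z))
        = fun z : ℂ => (c : ℂ) ^ n * (z ^ n * g z) by
      funext z; rw [hgc z, mul_pow]; ring] at this
    rw [integral_const_mul, hcpow] at this
    linear_combination (-(1:ℂ)/2) * this
  -- conclude
  have hterm : ∀ n : ℕ, (∫ a : ℂ, F n a) = 0 := by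
    intro n
    rcases Nat.eq_zero_or_pos n with h0 | h1
    · subst h0
      simpa [hF] using hgzero
    · have : (fun a : ℂ => F n a) = fun a => l ^ n / n.factorial * (a ^ n * g a) := by
        funext a; rw [hF]; simp only; rw [mul_pow]; ring
      rw [this, integral_const_mul, hmoment n h1, mul_zero]
  have hzero' : (∫ z : ℂ, Complex.exp (l * z) * g z) = 0 := by
    have h0 : HasSum (fun _ : ℕ => (0 : ℂ)) (∫ z : ℂ, Complex.exp (l * z) * g z) := by
      rw [show (fun n => ∫ a : ℂ, F n a) = fun _ => (0:ℂ) from funext hterm] at hsum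
      exact hsum
    simpa using h0.unique hasSum_zero
  -- translation step
  have htrans : (∫ z : ℂ, Complex.exp (l * z) * f z)
      = ∫ z : ℂ, Complex.exp (l * (w + z)) * g z := by
    rw [hg]
    exact (integral_add_left_eq_self (fun z => Complex.exp (l * z) * f z) w).symm
  rw [htrans]
  have : (fun z : ℂ => Complex.exp (l * (w + z)) * g z)
      = fun z => Complex.exp (l * w) * (Complex.exp (l * z) * g z) := by
    funext z; rw [mul_add, Complex.exp_add]; ring
  rw [this, integral_const_mul, hzero', mul_zero]
end

section
/- Define f : ℂ → ℂ by f(a + bi) = 1 if a, b ∈ [0,1], f(a + bi) = −1 if a, b ∈ [−1, 0], and f = 0 otherwise. Then ∫_ℂ f dH² = 0, but the function λ ↦ If(λ) = ∫_ℂ e^{λz}·f(z) dH²(z) is not identically zero. -/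
open MeasureTheory Complex

section Aux
open Set


private lemma integrable_ind (c : ℂ) (x y : ℝ) :
    Integrable ((Set.Icc x y).indicator (fun a : ℝ => Complex.exp (c * a))) := by
  rw [integrable_indicator_iff measurableSet_Icc]
  refine ContinuousOn.integrableOn_compact isCompact_Icc ?_
  exact (Complex.continuous_exp.comp (continuous_const.mul Complex.continuous_ofReal)).continuousOn

private lemma integrable_ind' (c : ℂ) (x y : ℝ) :
    Integrable ((Set.Icc x y).indicator (fun b : ℝ => Complex.exp (c * (b * I)))) := by
  rw [integrable_indicator_iff measurableSet_Icc]
  refine ContinuousOn.integrableOn_compact isCompact_Icc ?_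
  exact (Complex.continuous_exp.comp
    (continuous_const.mul (Complex.continuous_ofReal.mul continuous_const))).continuousOn

private lemma key (f : ℂ → ℂ)
    (hf : f = fun z : ℂ =>
      if z.re ∈ Set.Icc (0:ℝ) 1 ∧ z.im ∈ Set.Icc (0:ℝ) 1 then 1
      else if z.re ∈ Set.Icc (-1:ℝ) 0 ∧ z.im ∈ Set.Icc (-1:ℝ) 0 then -1
      else 0) (l : ℂ) :
    (∫ z : ℂ, Complex.exp (l * z) * f z)
      = (∫ a in Icc (0:ℝ) 1, Complex.exp (l * a)) * (∫ b in Icc (0:ℝ) 1, Complex.exp (l * (b * I)))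
        - (∫ a in Icc (-1:ℝ) 0, Complex.exp (l * a)) *
            (∫ b in Icc (-1:ℝ) 0, Complex.exp (l * (b * I))) := by
  set uP := (Set.Icc (0:ℝ) 1).indicator (fun a : ℝ => Complex.exp (l * a)) with huP
  set vP := (Set.Icc (0:ℝ) 1).indicator (fun b : ℝ => Complex.exp (l * (b * I))) with hvP
  set uN := (Set.Icc (-1:ℝ) 0).indicator (fun a : ℝ => Complex.exp (l * a)) with huN
  set vN := (Set.Icc (-1:ℝ) 0).indicator (fun b : ℝ => Complex.exp (l * (b * I))) with hvN
  have hT : (∫ z : ℂ, Complex.exp (l * z) * f z)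
      = ∫ p : ℝ × ℝ, Complex.exp (l * (p.1 + p.2 * I)) * f (p.1 + p.2 * I) := by
    rw [← (Complex.volume_preserving_equiv_real_prod.symm).integral_comp
      Complex.measurableEquivRealProd.symm.measurableEmbedding
      (fun z => Complex.exp (l * z) * f z)]
    congr 1; ext p
    simp [Complex.measurableEquivRealProd_symm_apply, Complex.mk_eq_add_mul_I]
  have hae : (fun p : ℝ × ℝ => Complex.exp (l * (p.1 + p.2 * I)) * f (p.1 + p.2 * I))
      =ᵐ[volume] fun p => uP p.1 * vP p.2 - uN p.1 * vN p.2 := by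
    have h0 : volume ({((0:ℝ), (0:ℝ))} : Set (ℝ × ℝ)) = 0 := by
      rw [show ({((0:ℝ), (0:ℝ))} : Set (ℝ × ℝ)) = {(0:ℝ)} ×ˢ {(0:ℝ)} by simp,
        Measure.volume_eq_prod, Measure.prod_prod]
      simp
    rw [Filter.EventuallyEq, ae_iff]
    refine measure_mono_null (fun p hp => ?_) h0
    simp only [Set.mem_setOf_eq] at hp
    by_contra hne
    apply hp
    have hre : ((p.1 : ℂ) + (p.2 : ℂ) * I).re = p.1 := by simp
    have him : ((p.1 : ℂ) + (p.2 : ℂ) * I).im = p.2 := by simp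
    have hexp : Complex.exp (l * (p.1 + p.2 * I))
        = Complex.exp (l * p.1) * Complex.exp (l * (p.2 * I)) := by
      rw [← Complex.exp_add]; ring_nf
    have hp12 : p.1 ≠ 0 ∨ p.2 ≠ 0 := by
      by_contra h
      push_neg at h
      exact hne (by simp [Set.mem_singleton_iff, Prod.ext_iff, h.1, h.2])
    rw [hf]
    simp only [hre, him]
    by_cases h1 : p.1 ∈ Set.Icc (0:ℝ) 1 ∧ p.2 ∈ Set.Icc (0:ℝ) 1
    · have hnot : ¬ (p.1 ∈ Set.Icc (-1:ℝ) 0 ∧ p.2 ∈ Set.Icc (-1:ℝ) 0) := by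
        rintro ⟨ha, hb⟩
        rcases hp12 with h | h
        · exact h (le_antisymm ha.2 h1.1.1)
        · exact h (le_antisymm hb.2 h1.2.1)
      rw [if_pos h1]
      rcases not_and_or.mp hnot with h | h
      · simp [huP, hvP, huN, Set.indicator_of_mem h1.1, Set.indicator_of_mem h1.2,
          Set.indicator_of_notMem h, hexp]
      · simp [huP, hvP, hvN, Set.indicator_of_mem h1.1, Set.indicator_of_mem h1.2,
          Set.indicator_of_notMem h, hexp]
    · rw [if_neg h1]
      by_cases h2 : p.1 ∈ Set.Icc (-1:ℝ) 0 ∧ p.2 ∈ Set.Icc (-1:ℝ) 0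
      · rw [if_pos h2]
        rcases not_and_or.mp h1 with h | h
        · simp [huP, huN, hvN, Set.indicator_of_mem h2.1, Set.indicator_of_mem h2.2,
            Set.indicator_of_notMem h, hexp]
        · simp [hvP, huN, hvN, Set.indicator_of_mem h2.1, Set.indicator_of_mem h2.2,
            Set.indicator_of_notMem h, hexp]
      · rw [if_neg h2]
        rcases not_and_or.mp h1 with h | h <;> rcases not_and_or.mp h2 with h' | h'
        · simp [huP, huN, Set.indicator_of_notMem h, Set.indicator_of_notMem h']
        · simp [huP, hvN, Set.indicator_of_notMem h, Set.indicator_of_notMem h']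
        · simp [hvP, huN, Set.indicator_of_notMem h, Set.indicator_of_notMem h']
        · simp [hvP, hvN, Set.indicator_of_notMem h, Set.indicator_of_notMem h']
  rw [hT, integral_congr_ae hae]
  have hi1 : Integrable (fun p : ℝ × ℝ => uP p.1 * vP p.2) := by
    rw [Measure.volume_eq_prod]; exact (integrable_ind l 0 1).mul_prod (integrable_ind' l 0 1)
  have hi2 : Integrable (fun p : ℝ × ℝ => uN p.1 * vN p.2) := by
    rw [Measure.volume_eq_prod]; exact (integrable_ind l (-1) 0).mul_prod (integrable_ind' l (-1) 0)
  rw [integral_sub hi1 hi2]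
  rw [show (volume : Measure (ℝ × ℝ)) = (volume : Measure ℝ).prod volume from rfl,
    integral_prod_mul, integral_prod_mul,
    huP, hvP, huN, hvN, integral_indicator measurableSet_Icc, integral_indicator measurableSet_Icc,
    integral_indicator measurableSet_Icc, integral_indicator measurableSet_Icc]

private lemma eval_exp (c : ℂ) (hc : c ≠ 0) {x y : ℝ} (hxy : x ≤ y) :
    (∫ a in Icc x y, Complex.exp (c * a)) = (Complex.exp (c*y) - Complex.exp (c*x))/c := by
  rw [integral_Icc_eq_integral_Ioc, ← intervalIntegral.integral_of_le hxy,
    integral_exp_mul_complex hc]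

private lemma eval_exp_I (c : ℂ) (hc : c ≠ 0) {x y : ℝ} (hxy : x ≤ y) :
    (∫ b in Icc x y, Complex.exp (c * (b * I)))
      = (Complex.exp (c*I*y) - Complex.exp (c*I*x))/(c*I) := by
  have h : ∀ b : ℝ, Complex.exp (c * (b * I)) = Complex.exp ((c*I) * b) := by
    intro b; ring_nf
  simp_rw [h]
  exact eval_exp (c*I) (mul_ne_zero hc I_ne_zero) hxy


end Aux

theorem two_squares_counterexample
    (f : ℂ → ℂ)
    (hf : f = fun z : ℂ =>
      if z.re ∈ Set.Icc (0:ℝ) 1 ∧ z.im ∈ Set.Icc (0:ℝ) 1 then 1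
      else if z.re ∈ Set.Icc (-1:ℝ) 0 ∧ z.im ∈ Set.Icc (-1:ℝ) 0 then -1
      else 0) :
    (∫ z : ℂ, f z) = 0 ∧ ¬ (∀ l : ℂ, (∫ z : ℂ, Complex.exp (l * z) * f z) = 0) := by
  constructor
  · have h0 := key f hf 0
    simp only [zero_mul, Complex.exp_zero, one_mul] at h0 ⊢
    rw [h0]
    simp [Real.volume_Icc]
  · intro hall
    have h1 := hall 1
    rw [key f hf 1] at h1
    rw [eval_exp 1 one_ne_zero zero_le_one, eval_exp 1 one_ne_zero (by norm_num : (-1:ℝ) ≤ 0),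
      eval_exp_I 1 one_ne_zero zero_le_one, eval_exp_I 1 one_ne_zero (by norm_num : (-1:ℝ) ≤ 0)] at h1
    simp only [one_mul, mul_one, mul_zero, Complex.exp_zero, div_one, Complex.ofReal_one,
      Complex.ofReal_zero, Complex.ofReal_neg, mul_neg] at h1
    -- inspect h1
    have hz : (0:ℂ) = (Complex.exp 1 - 1) * ((Complex.exp I - 1) / I)
        - (1 - Complex.exp (-1)) * ((1 - Complex.exp (-I)) / I) := h1.symm
    have hEne : Complex.exp 1 ≠ 0 := Complex.exp_ne_zero 1
    have hwne : Complex.exp I ≠ 0 := Complex.exp_ne_zero I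
    rw [Complex.exp_neg, Complex.exp_neg] at hz
    field_simp at hz
    have hz2 : (Complex.exp 1 - 1) * (Complex.exp I - 1) * (Complex.exp 1 * Complex.exp I - 1) = 0 := by
      linear_combination -hz
    have hE1 : Complex.exp 1 ≠ 1 := by
      rw [show (1:ℂ) = ((1:ℝ):ℂ) from rfl, ← Complex.ofReal_exp]
      intro h
      have := Complex.ofReal_injective (h.trans (by norm_num : ((1:ℝ):ℂ) = ((1:ℝ):ℂ)))
      have h2 : (1:ℝ) + 1 ≤ Real.exp 1 := Real.add_one_le_exp 1
      linarith [this]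
    have hw1 : Complex.exp I ≠ 1 := by
      intro h
      have him : (Complex.exp I).im = 0 := by rw [h]; simp
      rw [show (I:ℂ) = ((1:ℝ):ℂ) * I by simp, Complex.exp_ofReal_mul_I_im] at him
      have hs := Real.sin_pos_of_pos_of_lt_pi (by norm_num : (0:ℝ) < 1)
        (by linarith [Real.pi_gt_three])
      linarith
    have hEw : Complex.exp 1 * Complex.exp I ≠ 1 := by
      rw [← Complex.exp_add]
      intro h
      have := congrArg (‖·‖) h
      rw [Complex.norm_exp] at this
      simp at this
    rcases mul_eq_zero.mp hz2 with h | h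
    · rcases mul_eq_zero.mp h with h | h
      · exact (hE1 (sub_eq_zero.mp h)).elim
      · exact (hw1 (sub_eq_zero.mp h)).elim
    · exact (hEw (sub_eq_zero.mp h)).elim
end
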